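/- Assume relation (7), i.e. m^2*(y^2 + 1) = y*a. Then for every integer p ≥ 1, y^(2p+1) + 1 - x*y^(2p) - x*y = (y + 1)*(1 - x)*H_p. -/

import Mathlib

open Finset

/-- Equation (9) of the paper: assuming relation (7), for every integer `p ≥ 1`,
`y^(2p+1) + 1 - x y^(2p) - x y = (y + 1)(1 - x) H_p`. -/
theorem stmt_6 {K : Type*} [Field K] (m x y : K) (hm : m ≠ 0)
    (a b : K)
    (ha : a = m ^ 4 - x * m ^ 4 + x ^ 2 * m ^ 2 + m ^ 2 + 1 - x)
    (hb : b = m ^ 4 - x * m ^ 2 + 1)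
    (h7 : m ^ 2 * (y ^ 2 + 1) = y * a) :
    ∀ p : ℕ, 1 ≤ p →
      y ^ (2 * p + 1) + 1 - x * y ^ (2 * p) - x * y =
        (y + 1) * (1 - x) *
          ((y * b / m ^ 2) * (∑ i ∈ Finset.range p, y ^ (2 * i)) -
            (∑ i ∈ Finset.Ico 1 p, y ^ (2 * i))) := by
  intro p hp
  subst ha hb
  set D : K := y * (m ^ 4 - x * m ^ 2 + 1) / m ^ 2 with hD
  have hm2 : m ^ 2 ≠ 0 := pow_ne_zero _ hm
  have hkey : (1 - x) * D = y ^ 2 + 1 - (1 + x) * y := by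
    rw [hD]
    field_simp
    linear_combination -h7
  have hT : (∑ i ∈ Finset.Ico 1 p, y ^ (2 * i))
      = (∑ i ∈ Finset.range p, y ^ (2 * i)) - 1 := by
    rw [Finset.range_eq_Ico, Finset.sum_eq_sum_Ico_succ_bot hp]
    simp
  have geom : (y ^ 2 - 1) * (∑ i ∈ Finset.range p, y ^ (2 * i)) = y ^ (2 * p) - 1 := by
    have := geom_sum_mul (y ^ 2) p
    simp only [← pow_mul] at this
    linear_combination this
  have hps : y ^ (2 * p + 1) = y ^ (2 * p) * y := pow_succ y (2 * p)
  rw [hT, hps]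
  linear_combination (-(y + 1) * (∑ i ∈ Finset.range p, y ^ (2 * i))) * hkey
    - (y - x) * geom
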